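/- For j = 1,...,n let F_j be the equal-revenue distribution truncated at 2^{j+1}, and assume the buyer breaks ties among items with equal utility consistently in favor of the higher-priced item. Then for every k ≥ 1, every pricing p that uses at most k distinct finite prices satisfies R(p) ≤ R(p, F^com) ≤ k, where F^com is the comonotonic distribution. Consequently, since R* ≥ n/3 for this instance, no pricing with at most k distinct prices is better than Θ(n/k)-max-min optimal. -/

import Mathlib

open MeasureTheory
open scoped ENNReal NNReal

noncomputable section

/-- A buyer's purchase rule for `n` items: given a valuation profile and a vector of item prices
(in `[0,∞]`), `choose` returns the purchased item (or `none` if nothing is purchased).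
The axioms say: a purchased item has a finite price and yields nonnegative utility
(`feasible`), the purchased item maximizes utility among all items (`optimal`), and the buyer
does purchase whenever some item yields nonnegative utility (`active`). Ties among
utility-maximizing items are broken according to the (fixed) rule embodied by `choose`. -/
structure BuyerRule (n : ℕ) where
  choose : (Fin n → ℝ) → (Fin n → ℝ≥0∞) → Option (Fin n)
  feasible : ∀ v p j, choose v p = some j → p j ≠ ⊤ ∧ (p j).toReal ≤ v j
  optimal : ∀ v p j k, choose v p = some j → p k ≠ ⊤ →
      v k - (p k).toReal ≤ v j - (p j).toReal
  active : ∀ v p, (∃ k, p k ≠ ⊤ ∧ (p k).toReal ≤ v k) → (choose v p).isSome = true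

/-- The seller's revenue from valuation profile `v` under pricing `p`. -/
def BuyerRule.revenue {n : ℕ} (B : BuyerRule n) (p : Fin n → ℝ≥0∞) (v : Fin n → ℝ) : ℝ≥0∞ :=
  (B.choose v p).elim 0 (fun j => p j)

/-- A joint distribution `F` on valuation profiles is compatible with the marginals `marg`
if it is a probability measure whose `j`-th one-dimensional marginal is `marg j` for every `j`. -/
def Compatible {n : ℕ} (marg : Fin n → Measure ℝ) (F : Measure (Fin n → ℝ)) : Prop :=
  IsProbabilityMeasure F ∧ ∀ j, F.map (fun v => v j) = marg j

/-- `R(p,F)`: the expected revenue of pricing `p` under joint distribution `F`. -/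
def expRev {n : ℕ} (B : BuyerRule n) (p : Fin n → ℝ≥0∞) (F : Measure (Fin n → ℝ)) : ℝ≥0∞ :=
  ∫⁻ v, B.revenue p v ∂F

/-- `R(p)`: the robust revenue guarantee of `p`, the infimum of `R(p,F)` over compatible `F`. -/
def robustRev {n : ℕ} (B : BuyerRule n) (marg : Fin n → Measure ℝ) (p : Fin n → ℝ≥0∞) : ℝ≥0∞ :=
  ⨅ (F : Measure (Fin n → ℝ)) (_ : Compatible marg F), expRev B p F

/-- `R*`: the optimal robust revenue guarantee over all pricings. -/
def optRobust {n : ℕ} (B : BuyerRule n) (marg : Fin n → Measure ℝ) : ℝ≥0∞ :=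
  ⨆ p : Fin n → ℝ≥0∞, robustRev B marg p

/-- The equal-revenue distribution truncated at `t`: the distribution of `min(X, t)` where
`Pr[X > x] = 1/x` for `x ≥ 1`. It has density `1/x²` on `[1, t)` and an atom of mass `1/t`
at `t`. -/
def erTrunc (t : ℝ) : Measure ℝ :=
  (volume.restrict (Set.Ico 1 t)).withDensity (fun x => ENNReal.ofReal (x ^ 2)⁻¹)
    + ENNReal.ofReal t⁻¹ • Measure.dirac t

/-- `F⁻¹(q)`: the value of `μ` at quantile `q`, i.e. `min {v : F(v) ≥ q}`. -/
def quantileFn (μ : Measure ℝ) (q : ℝ) : ℝ :=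
  sInf {v : ℝ | q ≤ (μ (Set.Iic v)).toReal}

/-- The comonotonic joint distribution compatible with the marginals `marg`: draw a single
quantile `q` uniformly from `[0,1]` and set `v_j = min {v : F_j(v) ≥ q}` for every item `j`. -/
def comon {n : ℕ} (marg : Fin n → Measure ℝ) : Measure (Fin n → ℝ) :=
  (volume.restrict (Set.Icc (0 : ℝ) 1)).map (fun q => fun j => quantileFn (marg j) q)


section AuxLemmas
open Set



lemma lint_inv_sq {a b : ℝ} (ha : 1 ≤ a) (hab : a ≤ b) :
    ∫⁻ x in Ioc a b, ENNReal.ofReal (x ^ 2)⁻¹ ∂volume = ENNReal.ofReal (a⁻¹ - b⁻¹) := by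
  have hcont : ContinuousOn (fun x : ℝ => (x ^ 2)⁻¹) (Icc a b) := by
    apply ContinuousOn.inv₀ (by fun_prop)
    intro x hx
    have := hx.1; nlinarith
  have hint : IntegrableOn (fun x : ℝ => (x ^ 2)⁻¹) (Ioc a b) volume :=
    (hcont.integrableOn_Icc).mono_set Ioc_subset_Icc_self
  rw [← ofReal_integral_eq_lintegral_ofReal hint
      (Filter.Eventually.of_forall (fun x => by positivity))]
  congr 1
  have h0 : (0:ℝ) ∉ Set.uIcc a b := by
    rw [Set.uIcc_of_le hab]; intro h; have := h.1; linarith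
  have heq : ∀ x : ℝ, (x ^ 2)⁻¹ = x ^ (-2 : ℤ) := by
    intro x
    rw [zpow_neg, ← zpow_natCast x 2]
    norm_num
  calc ∫ x in Ioc a b, (x ^ 2)⁻¹
      = ∫ x in a..b, (x ^ 2)⁻¹ := (intervalIntegral.integral_of_le hab).symm
    _ = ∫ x in a..b, x ^ (-2 : ℤ) := by simp_rw [heq]
    _ = (b ^ ((-2:ℤ) + 1) - a ^ ((-2:ℤ) + 1)) / (((-2:ℤ) : ℝ) + 1) :=
        integral_zpow (Or.inr ⟨by norm_num, h0⟩)
    _ = a⁻¹ - b⁻¹ := by norm_num; ring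

lemma erTrunc_apply {t : ℝ} {s : Set ℝ} (hs : MeasurableSet s) :
    erTrunc t s = (∫⁻ x in s ∩ Ico 1 t, ENNReal.ofReal (x ^ 2)⁻¹ ∂volume)
      + ENNReal.ofReal t⁻¹ * s.indicator 1 t := by
  rw [erTrunc, Measure.add_apply, Measure.smul_apply, smul_eq_mul,
    withDensity_apply _ hs, Measure.restrict_restrict hs, Measure.dirac_apply' _ hs]

lemma erTrunc_Iic_lt_one {t v : ℝ} (ht : 1 < t) (hv : v < 1) : erTrunc t (Iic v) = 0 := by
  rw [erTrunc_apply measurableSet_Iic]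
  have h1 : Iic v ∩ Ico 1 t = ∅ := by
    ext x; simp only [mem_inter_iff, mem_Iic, mem_Ico, mem_empty_iff_false, iff_false]
    rintro ⟨h1, h2, h3⟩; linarith
  have h2 : t ∉ Iic v := by simp only [mem_Iic, not_le]; linarith
  rw [h1, Set.indicator_of_notMem h2]
  simp

lemma erTrunc_Iic_mid {t v : ℝ} (ht : 1 < t) (h1 : 1 ≤ v) (hvt : v < t) :
    erTrunc t (Iic v) = ENNReal.ofReal (1 - v⁻¹) := by
  rw [erTrunc_apply measurableSet_Iic]
  have h2 : t ∉ Iic v := by simp only [mem_Iic, not_le]; linarith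
  have hset : Iic v ∩ Ico 1 t = Icc 1 v := by
    ext x; simp only [mem_inter_iff, mem_Iic, mem_Ico, mem_Icc]
    constructor
    · rintro ⟨a, b, c⟩; exact ⟨b, a⟩
    · rintro ⟨a, b⟩; exact ⟨b, a, by linarith⟩
  rw [hset, Set.indicator_of_notMem h2, mul_zero, add_zero,
    setLIntegral_congr (Ioc_ae_eq_Icc (μ := volume)).symm, lint_inv_sq le_rfl h1]
  norm_num

lemma erTrunc_Iic_ge {t v : ℝ} (ht : 1 < t) (hvt : t ≤ v) :
    erTrunc t (Iic v) = 1 := by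
  rw [erTrunc_apply measurableSet_Iic]
  have h2 : t ∈ Iic v := hvt
  have hset : Iic v ∩ Ico 1 t = Ico 1 t := by
    rw [inter_eq_right]; intro x hx; exact le_trans hx.2.le hvt
  rw [hset, Set.indicator_of_mem h2, setLIntegral_congr (Ico_ae_eq_Ioc (μ := volume)),
    lint_inv_sq le_rfl ht.le]
  have ht0 : (0:ℝ) < t⁻¹ := by positivity
  have htinv : t⁻¹ ≤ 1 := by
    rw [inv_le_one_iff₀]; right; linarith
  simp only [Pi.one_apply, mul_one, inv_one]
  rw [← ENNReal.ofReal_add (by linarith) (by linarith)]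
  norm_num

lemma erTrunc_univ {t : ℝ} (ht : 1 < t) : erTrunc t univ = 1 := by
  rw [erTrunc_apply MeasurableSet.univ, univ_inter,
    setLIntegral_congr (Ico_ae_eq_Ioc (μ := volume)), lint_inv_sq le_rfl ht.le,
    Set.indicator_of_mem (mem_univ t)]
  have ht0 : (0:ℝ) < t⁻¹ := by positivity
  have htinv : t⁻¹ ≤ 1 := by rw [inv_le_one_iff₀]; right; linarith
  simp only [Pi.one_apply, mul_one, inv_one]
  rw [← ENNReal.ofReal_add (by linarith) (by linarith)]
  norm_num

lemma erTrunc_singleton {t : ℝ} (ht : 1 < t) : erTrunc t {t} = ENNReal.ofReal t⁻¹ := by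
  rw [erTrunc_apply (measurableSet_singleton t)]
  have h1 : ({t} : Set ℝ) ∩ Ico 1 t = ∅ := by
    ext x; simp only [mem_inter_iff, mem_singleton_iff, mem_Ico, mem_empty_iff_false, iff_false]
    rintro ⟨rfl, _, h⟩; exact lt_irrefl _ h
  rw [h1, Set.indicator_of_mem (mem_singleton t)]
  simp

lemma erTrunc_Ioi {t : ℝ} (ht : 1 < t) : erTrunc t (Ioi t) = 0 := by
  rw [erTrunc_apply measurableSet_Ioi]
  have h1 : Ioi t ∩ Ico 1 t = ∅ := by
    ext x; simp only [mem_inter_iff, mem_Ioi, mem_Ico, mem_empty_iff_false, iff_false]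
    rintro ⟨h1, _, h3⟩; linarith
  have h2 : t ∉ Ioi t := lt_irrefl t
  rw [h1, Set.indicator_of_notMem h2]
  simp

lemma quantileFn_erTrunc {t q : ℝ} (ht : 1 < t) (hq : q ∈ Ioo (0:ℝ) 1) :
    quantileFn (erTrunc t) q = min (1 - q)⁻¹ t := by
  obtain ⟨hq0, hq1⟩ := hq
  have h1q : (0:ℝ) < 1 - q := by linarith
  have hm1 : 1 < (1 - q)⁻¹ := by
    rw [lt_inv_comm₀ one_pos h1q]; simpa using hq0
  set m := min (1 - q)⁻¹ t with hm
  have hm1' : 1 < m := lt_min hm1 ht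
  have hset : {v : ℝ | q ≤ ((erTrunc t) (Iic v)).toReal} = Ici m := by
    ext v
    simp only [mem_setOf_eq, mem_Ici]
    constructor
    · intro h
      by_contra hvm
      push_neg at hvm
      rcases lt_or_ge v 1 with h1 | h1
      · rw [erTrunc_Iic_lt_one ht h1] at h
        simp only [ENNReal.toReal_zero] at h; linarith
      · have hvt : v < t := lt_of_lt_of_le hvm (min_le_right _ _)
        have hv0 : (0:ℝ) < v := by linarith
        rw [erTrunc_Iic_mid ht h1 hvt, ENNReal.toReal_ofReal
          (by rw [sub_nonneg, inv_le_one_iff₀]; right; linarith)] at h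
        have hvq : v < (1 - q)⁻¹ := lt_of_lt_of_le hvm (min_le_left _ _)
        -- from h : q ≤ 1 - v⁻¹, so v⁻¹ ≤ 1 - q, so v ≥ (1-q)⁻¹, contradiction
        have h2 : v⁻¹ ≤ 1 - q := by linarith
        have h3 : (1 - q)⁻¹ ≤ v := by
          rw [inv_le_comm₀ h1q hv0]
          exact h2
        linarith
    · intro h
      rcases le_or_gt t v with hvt | hvt
      · rw [erTrunc_Iic_ge ht hvt]; simp; linarith
      · have h1 : 1 ≤ v := le_trans hm1'.le h
        have hv0 : (0:ℝ) < v := by linarith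
        rw [erTrunc_Iic_mid ht h1 hvt, ENNReal.toReal_ofReal
          (by rw [sub_nonneg, inv_le_one_iff₀]; right; linarith)]
        have hle : (1 - q)⁻¹ ≤ v := by
          by_contra hc
          push_neg at hc
          exact absurd h (not_le.mpr (lt_min hc hvt))
        have h2 : v⁻¹ ≤ 1 - q := by
          rw [inv_le_comm₀ hv0 h1q]
          exact hle
        linarith
  rw [quantileFn, hset, csInf_Ici]

lemma vol_inter_Icc_eq_Ico (A : Set ℝ) :
    volume (A ∩ Icc (0:ℝ) 1) = volume (A ∩ Ico (0:ℝ) 1) := by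
  apply le_antisymm
  · calc volume (A ∩ Icc 0 1) ≤ volume ((A ∩ Ico 0 1) ∪ {1}) := by
          apply measure_mono
          rintro x ⟨hA, h0, h1⟩
          rcases eq_or_lt_of_le h1 with rfl | h1'
          · exact Or.inr rfl
          · exact Or.inl ⟨hA, h0, h1'⟩
      _ ≤ volume (A ∩ Ico 0 1) + volume {1} := measure_union_le _ _
      _ = volume (A ∩ Ico 0 1) := by simp
  · exact measure_mono (inter_subset_inter_right _ Ico_subset_Icc_self)

lemma map_min_inv_eq_erTrunc {t : ℝ} (ht : 1 < t) :
    (volume.restrict (Icc (0:ℝ) 1)).map (fun q => min (1 - q)⁻¹ t) = erTrunc t := by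
  have hg : Measurable fun q : ℝ => min (1 - q)⁻¹ t :=
    ((measurable_const.sub measurable_id).inv).min measurable_const
  haveI : IsFiniteMeasure (volume.restrict (Icc (0:ℝ) 1)) := by
    constructor
    rw [Measure.restrict_apply MeasurableSet.univ, univ_inter, Real.volume_Icc]
    simp
  refine Measure.ext_of_Iic _ _ (fun v => ?_)
  rw [Measure.map_apply hg measurableSet_Iic, Measure.restrict_apply' measurableSet_Icc,
    vol_inter_Icc_eq_Ico]
  rcases lt_or_ge v 1 with h1 | h1
  · have hset : ((fun q => min (1 - q)⁻¹ t) ⁻¹' Iic v) ∩ Ico (0:ℝ) 1 = ∅ := by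
      ext q
      simp only [mem_inter_iff, mem_preimage, mem_Iic, mem_Ico, mem_empty_iff_false, iff_false,
        not_and, and_imp]
      intro hmin hq0 hq1
      exfalso
      have h1q : (0:ℝ) < 1 - q := by linarith
      have : 1 ≤ (1 - q)⁻¹ := by
        rw [le_inv_comm₀ one_pos h1q, inv_one]; linarith
      have : 1 ≤ min (1 - q)⁻¹ t := le_min this ht.le
      linarith
    rw [hset, measure_empty, erTrunc_Iic_lt_one ht h1]
  rcases lt_or_ge v t with hvt | hvt
  · have hv0 : (0:ℝ) < v := by linarith
    have hset : ((fun q => min (1 - q)⁻¹ t) ⁻¹' Iic v) ∩ Ico (0:ℝ) 1 = Icc 0 (1 - v⁻¹) := by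
      ext q
      simp only [mem_inter_iff, mem_preimage, mem_Iic, mem_Ico, mem_Icc]
      constructor
      · rintro ⟨hmin, hq0, hq1⟩
        have h1q : (0:ℝ) < 1 - q := by linarith
        have hle : (1 - q)⁻¹ ≤ v := by
          rcases min_le_iff.mp hmin with h | h
          · exact h
          · linarith
        have h2 : v⁻¹ ≤ 1 - q := by
          rw [inv_le_comm₀ hv0 h1q]
          exact hle
        exact ⟨hq0, by linarith⟩
      · rintro ⟨hq0, hq2⟩
        have hvinv : (0:ℝ) < v⁻¹ := by positivity
        have hvinv1 : v⁻¹ ≤ 1 := by rw [inv_le_one_iff₀]; right; exact h1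
        have hq1 : q < 1 := by linarith
        have h1q : (0:ℝ) < 1 - q := by linarith
        refine ⟨?_, hq0, hq1⟩
        have h2 : v⁻¹ ≤ 1 - q := by linarith
        have h3 : (1 - q)⁻¹ ≤ v := by
          rw [inv_le_comm₀ h1q hv0]
          exact h2
        exact le_trans (min_le_left _ _) h3
    rw [hset, Real.volume_Icc, erTrunc_Iic_mid ht h1 hvt, sub_zero]
  · have hset : ((fun q => min (1 - q)⁻¹ t) ⁻¹' Iic v) ∩ Ico (0:ℝ) 1 = Ico (0:ℝ) 1 := by
      rw [inter_eq_right]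
      intro q hq
      exact le_trans (min_le_right _ _) hvt
    rw [hset, Real.volume_Ico, erTrunc_Iic_ge ht hvt]
    simp

lemma one_lt_two_pow_real (m : ℕ) : (1:ℝ) < 2 ^ (m + 2) := by
  calc (1:ℝ) < 2 := one_lt_two
    _ ≤ 2 ^ (m + 2) := le_self_pow₀ one_le_two (by omega)

lemma restrict_Icc01_prob : IsProbabilityMeasure (volume.restrict (Icc (0:ℝ) 1)) := by
  constructor
  rw [Measure.restrict_apply MeasurableSet.univ, univ_inter, Real.volume_Icc]
  simp

lemma ae_mem_Ioo01 :
    ∀ᵐ q ∂(volume.restrict (Icc (0:ℝ) 1)), q ∈ Ioo (0:ℝ) 1 := by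
  have h01 : (volume.restrict (Icc (0:ℝ) 1)) ({0, 1} : Set ℝ) = 0 := by
    rw [Measure.restrict_apply' measurableSet_Icc]
    exact measure_mono_null inter_subset_left
      ((Set.to_countable _).measure_zero volume)
  have hmem : ∀ᵐ q ∂(volume.restrict (Icc (0:ℝ) 1)), q ∈ Icc (0:ℝ) 1 :=
    ae_restrict_mem measurableSet_Icc
  have hnot : ∀ᵐ q ∂(volume.restrict (Icc (0:ℝ) 1)), q ∉ ({0, 1} : Set ℝ) := by
    rw [ae_iff]
    apply measure_mono_null _ h01
    intro q hq
    simp only [mem_setOf_eq, not_not] at hq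
    exact hq
  filter_upwards [hmem, hnot] with q hq hq'
  simp only [mem_insert_iff, mem_singleton_iff, not_or] at hq'
  exact ⟨lt_of_le_of_ne hq.1 (Ne.symm hq'.1), lt_of_le_of_ne hq.2 hq'.2⟩

lemma comon_ae_eq {n : ℕ} (marg : Fin n → Measure ℝ)
    (hmarg : ∀ i : Fin n, marg i = erTrunc ((2 : ℝ) ^ ((i : ℕ) + 2))) :
    (fun q => fun j : Fin n => quantileFn (marg j) q) =ᵐ[volume.restrict (Icc (0:ℝ) 1)]
      (fun q => fun j : Fin n => min (1 - q)⁻¹ ((2:ℝ) ^ ((j:ℕ) + 2))) := by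
  filter_upwards [ae_mem_Ioo01] with q hq
  funext j
  rw [hmarg j, quantileFn_erTrunc (one_lt_two_pow_real _) hq]

lemma comon_G_measurable (n : ℕ) :
    Measurable (fun q => fun j : Fin n => min (1 - q)⁻¹ ((2:ℝ) ^ ((j:ℕ) + 2))) :=
  measurable_pi_lambda _ fun _ =>
    ((measurable_const.sub measurable_id).inv).min measurable_const

lemma comon_aemeasurable {n : ℕ} (marg : Fin n → Measure ℝ)
    (hmarg : ∀ i : Fin n, marg i = erTrunc ((2 : ℝ) ^ ((i : ℕ) + 2))) :
    AEMeasurable (fun q => fun j : Fin n => quantileFn (marg j) q)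
      (volume.restrict (Icc (0:ℝ) 1)) :=
  ((comon_G_measurable n).aemeasurable).congr (comon_ae_eq marg hmarg).symm

lemma comon_compatible {n : ℕ} (marg : Fin n → Measure ℝ)
    (hmarg : ∀ i : Fin n, marg i = erTrunc ((2 : ℝ) ^ ((i : ℕ) + 2))) :
    Compatible marg (comon marg) := by
  haveI := restrict_Icc01_prob
  constructor
  · exact Measure.isProbabilityMeasure_map (comon_aemeasurable marg hmarg)
  · intro j
    rw [comon, AEMeasurable.map_map_of_aemeasurable
      (measurable_pi_apply j).aemeasurable (comon_aemeasurable marg hmarg)]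
    have : ((fun v : Fin n → ℝ => v j) ∘ (fun q => fun i : Fin n => quantileFn (marg i) q))
        = fun q => quantileFn (marg j) q := rfl
    rw [this]
    have hae : (fun q => quantileFn (marg j) q) =ᵐ[volume.restrict (Icc (0:ℝ) 1)]
        (fun q => min (1 - q)⁻¹ ((2:ℝ) ^ ((j:ℕ) + 2))) := by
      filter_upwards [ae_mem_Ioo01] with q hq
      rw [hmarg j, quantileFn_erTrunc (one_lt_two_pow_real _) hq]
    rw [Measure.map_congr hae, map_min_inv_eq_erTrunc (one_lt_two_pow_real _), hmarg j]

lemma expRev_comon_le {n : ℕ} (B : BuyerRule n) (marg : Fin n → Measure ℝ)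
    (hmarg : ∀ i : Fin n, marg i = erTrunc ((2 : ℝ) ^ ((i : ℕ) + 2)))
    (k : ℕ) (p : Fin n → ℝ≥0∞)
    (hdistinct : ({c : ℝ≥0∞ | c ≠ ⊤ ∧ ∃ i : Fin n, p i = c}).ncard ≤ k) :
    expRev B p (comon marg) ≤ (k : ℝ≥0∞) := by
  classical
  set S : Set ℝ≥0∞ := {c : ℝ≥0∞ | c ≠ ⊤ ∧ ∃ i : Fin n, p i = c} with hS
  have hSfin : S.Finite := by
    apply (Set.finite_range p).subset
    rintro c ⟨-, i, rfl⟩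
    exact mem_range_self i
  set D : ℝ≥0∞ → Set (Fin n → ℝ) :=
    fun c => ⋃ j : Fin n, {v : Fin n → ℝ | p j = c ∧ c.toReal ≤ v j} with hD
  have hDmeas : ∀ c, MeasurableSet (D c) := by
    intro c
    apply MeasurableSet.iUnion
    intro j
    by_cases hj : p j = c
    · have : {v : Fin n → ℝ | p j = c ∧ c.toReal ≤ v j}
          = (fun v : Fin n → ℝ => v j) ⁻¹' Ici c.toReal := by
        ext v; simp [hj]
      rw [this]
      exact (measurable_pi_apply j) measurableSet_Ici
    · have : {v : Fin n → ℝ | p j = c ∧ c.toReal ≤ v j} = ∅ := by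
        ext v; simp [hj]
      rw [this]; exact MeasurableSet.empty
  haveI hprob : IsProbabilityMeasure (comon marg) := (comon_compatible marg hmarg).1
  have hpt : ∀ v : Fin n → ℝ,
      B.revenue p v ≤ ∑ c ∈ hSfin.toFinset, c * (D c).indicator 1 v := by
    intro v
    rcases hch : B.choose v p with _ | j
    · simp [BuyerRule.revenue, hch]
    · have hfeas := B.feasible v p j hch
      have hmem : p j ∈ hSfin.toFinset := by
        rw [Set.Finite.mem_toFinset]
        exact ⟨hfeas.1, j, rfl⟩
      have hvD : v ∈ D (p j) := by
        rw [hD]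
        exact mem_iUnion.mpr ⟨j, ⟨rfl, hfeas.2⟩⟩
      have : B.revenue p v = p j * (D (p j)).indicator 1 v := by
        rw [Set.indicator_of_mem hvD, Pi.one_apply, mul_one]
        simp [BuyerRule.revenue, hch]
      rw [this]
      exact Finset.single_le_sum (f := fun c => c * (D c).indicator 1 v) (fun c _ => zero_le) hmem
  have hterm : ∀ c ∈ hSfin.toFinset, c * (comon marg) (D c) ≤ 1 := by
    intro c hc
    rw [Set.Finite.mem_toFinset] at hc
    obtain ⟨hctop, i₀, hi₀⟩ := hc
    by_cases hc1 : c.toReal ≤ 1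
    · calc c * (comon marg) (D c) ≤ c * 1 := mul_le_mul_right (prob_le_one : (comon marg) (D c) ≤ 1) c
        _ = c := mul_one c
        _ ≤ 1 := by
            rw [← ENNReal.ofReal_toReal hctop, ← ENNReal.ofReal_one]
            exact ENNReal.ofReal_le_ofReal hc1
    · push_neg at hc1
      have hc0 : (0:ℝ) < c.toReal := by linarith
      have hmeas : (comon marg) (D c) ≤ ENNReal.ofReal c.toReal⁻¹ := by
        rw [comon, Measure.map_apply_of_aemeasurable (comon_aemeasurable marg hmarg) (hDmeas c),
          Measure.restrict_apply' measurableSet_Icc]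
        have hsub : ((fun q => fun j : Fin n => quantileFn (marg j) q) ⁻¹' D c) ∩ Icc (0:ℝ) 1
            ⊆ Icc (1 - c.toReal⁻¹) 1 ∪ ({0, 1} : Set ℝ) := by
          rintro q ⟨hqD, hq0, hq1⟩
          by_cases hq0' : q = 0
          · exact Or.inr (Or.inl hq0')
          by_cases hq1' : q = 1
          · exact Or.inr (Or.inr hq1')
          have hqIoo : q ∈ Ioo (0:ℝ) 1 :=
            ⟨lt_of_le_of_ne hq0 (Ne.symm hq0'), lt_of_le_of_ne hq1 hq1'⟩
          obtain ⟨j, hpj, hcle⟩ := mem_iUnion.mp hqD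
          have hcle : c.toReal ≤ quantileFn (marg j) q := hcle
          rw [hmarg j, quantileFn_erTrunc (one_lt_two_pow_real _) hqIoo] at hcle
          have h1q : (0:ℝ) < 1 - q := by linarith [hqIoo.2]
          have h2 : c.toReal ≤ (1 - q)⁻¹ := le_trans hcle (min_le_left _ _)
          have h3 : 1 - q ≤ c.toReal⁻¹ := by
            rw [← le_inv_comm₀ hc0 h1q]
            exact h2
          exact Or.inl ⟨by linarith, hq1⟩
        calc volume (((fun q => fun j : Fin n => quantileFn (marg j) q) ⁻¹' D c) ∩ Icc (0:ℝ) 1)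
            ≤ volume (Icc (1 - c.toReal⁻¹) 1 ∪ ({0, 1} : Set ℝ)) := measure_mono hsub
          _ ≤ volume (Icc (1 - c.toReal⁻¹) 1) + volume ({0, 1} : Set ℝ) := measure_union_le _ _
          _ = ENNReal.ofReal c.toReal⁻¹ := by
              rw [(Set.to_countable ({0,1} : Set ℝ)).measure_zero volume, add_zero, Real.volume_Icc]
              congr 1; ring
      calc c * (comon marg) (D c) ≤ c * ENNReal.ofReal c.toReal⁻¹ := mul_le_mul_right hmeas c
        _ = ENNReal.ofReal c.toReal * ENNReal.ofReal c.toReal⁻¹ := by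
            rw [ENNReal.ofReal_toReal hctop]
        _ = ENNReal.ofReal (c.toReal * c.toReal⁻¹) :=
            (ENNReal.ofReal_mul (le_of_lt hc0)).symm
        _ = 1 := by rw [mul_inv_cancel₀ (ne_of_gt hc0), ENNReal.ofReal_one]
  calc expRev B p (comon marg)
      ≤ ∫⁻ v, ∑ c ∈ hSfin.toFinset, c * (D c).indicator 1 v ∂(comon marg) :=
        lintegral_mono hpt
    _ = ∑ c ∈ hSfin.toFinset, ∫⁻ v, c * (D c).indicator 1 v ∂(comon marg) :=
        lintegral_finset_sum _ (fun c _ =>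
          (measurable_one.indicator (hDmeas c)).const_mul c)
    _ = ∑ c ∈ hSfin.toFinset, c * (comon marg) (D c) := by
        apply Finset.sum_congr rfl
        intro c _
        rw [lintegral_const_mul c (measurable_one.indicator (hDmeas c)),
          lintegral_indicator (hDmeas c)]
        simp
    _ ≤ ∑ _c ∈ hSfin.toFinset, (1:ℝ≥0∞) := Finset.sum_le_sum hterm
    _ = (hSfin.toFinset.card : ℝ≥0∞) := by rw [Finset.sum_const, nsmul_eq_mul, mul_one]
    _ ≤ (k : ℝ≥0∞) := by
        rw [show hSfin.toFinset.card = S.ncard from (Set.ncard_eq_toFinset_card S hSfin).symm]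
        exact Nat.cast_le.mpr hdistinct

lemma optRobust_ge {n : ℕ} (B : BuyerRule n) (marg : Fin n → Measure ℝ)
    (hmarg : ∀ i : Fin n, marg i = erTrunc ((2 : ℝ) ^ ((i : ℕ) + 2))) :
    (n : ℝ≥0∞) / 3 ≤ optRobust B marg := by
  classical
  set P : Fin n → ℝ≥0∞ := fun i => ENNReal.ofReal (2/3 * 2 ^ ((i:ℕ) + 2)) with hP
  have hPfin : ∀ i, P i ≠ ⊤ := fun i => ENNReal.ofReal_ne_top
  have hPto : ∀ i, (P i).toReal = 2/3 * 2 ^ ((i:ℕ) + 2) :=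
    fun i => ENNReal.toReal_ofReal (by positivity)
  rw [optRobust]
  refine le_trans ?_ (le_iSup _ P)
  rw [robustRev]
  refine le_iInf fun F => le_iInf fun hF => ?_
  obtain ⟨hFprob, hFmarg⟩ := hF
  set C : Fin n → Set (Fin n → ℝ) :=
    fun i => ⋃ l : Fin n, {v : Fin n → ℝ | i ≤ l ∧ v l = 2 ^ ((l:ℕ) + 2)} with hC
  have hCmeas : ∀ i, MeasurableSet (C i) := by
    intro i
    apply MeasurableSet.iUnion
    intro l
    by_cases hil : i ≤ l
    · have : {v : Fin n → ℝ | i ≤ l ∧ v l = 2 ^ ((l:ℕ) + 2)}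
          = (fun v : Fin n → ℝ => v l) ⁻¹' {(2:ℝ) ^ ((l:ℕ) + 2)} := by ext v; simp [hil]
      rw [this]; exact (measurable_pi_apply l) (measurableSet_singleton _)
    · have : {v : Fin n → ℝ | i ≤ l ∧ v l = 2 ^ ((l:ℕ) + 2)} = ∅ := by ext v; simp [hil]
      rw [this]; exact MeasurableSet.empty
  have hbdd : ∀ᵐ v ∂F, ∀ j : Fin n, v j ≤ 2 ^ ((j:ℕ) + 2) := by
    rw [ae_all_iff]
    intro j
    rw [ae_iff]
    have hset : {v : Fin n → ℝ | ¬ v j ≤ 2 ^ ((j:ℕ) + 2)}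
        = (fun v : Fin n → ℝ => v j) ⁻¹' (Ioi ((2:ℝ) ^ ((j:ℕ) + 2))) := by
      ext v; simp [not_le]
    rw [hset, ← Measure.map_apply (measurable_pi_apply j) measurableSet_Ioi,
      hFmarg j, hmarg j, erTrunc_Ioi (one_lt_two_pow_real _)]
  have hpt : ∀ᵐ v ∂F,
      ∑ i : Fin n, (C i).indicator (fun _ => ENNReal.ofReal (2 ^ ((i:ℕ) + 2) / 3)) v
        ≤ B.revenue P v := by
    filter_upwards [hbdd] with v hv
    by_cases hex : ∃ i : Fin n, v i = 2 ^ ((i:ℕ) + 2)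
    · set s : Finset (Fin n) := Finset.univ.filter (fun i : Fin n => v i = 2 ^ ((i:ℕ) + 2))
        with hs
      have hsne : s.Nonempty := by
        obtain ⟨i, hi⟩ := hex
        exact ⟨i, by simp [hs, hi]⟩
      set L : Fin n := s.max' hsne with hL
      have hLmem : v L = 2 ^ ((L:ℕ) + 2) :=
        (Finset.mem_filter.mp (s.max'_mem hsne)).2
      have hLmax : ∀ i : Fin n, v i = 2 ^ ((i:ℕ) + 2) → i ≤ L :=
        fun i hi => s.le_max' i (by simp [hs, hi])
      have hLpos : (0:ℝ) < 2 ^ ((L:ℕ) + 2) := by positivity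
      have hact : (B.choose v P).isSome = true := by
        apply B.active
        exact ⟨L, hPfin L, by rw [hPto L, hLmem]; linarith⟩
      obtain ⟨j, hj⟩ := Option.isSome_iff_exists.mp hact
      have hfeas := B.feasible v P j hj
      have hopt := B.optimal v P j L hj (hPfin L)
      rw [hPto L, hPto j, hLmem] at hopt
      have hjL : (2:ℝ) ^ ((L:ℕ) + 2) ≤ 2 ^ ((j:ℕ) + 2) := by
        have := hv j
        linarith
      have hrev : B.revenue P v = P j := by simp [BuyerRule.revenue, hj]
      calc ∑ i : Fin n, (C i).indicator (fun _ => ENNReal.ofReal (2 ^ ((i:ℕ) + 2) / 3)) v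
          ≤ ∑ i : Fin n, (if (i:ℕ) ≤ (L:ℕ) then ENNReal.ofReal ((2:ℝ) ^ ((i:ℕ) + 2) / 3) else 0) := by
            apply Finset.sum_le_sum
            intro i _
            by_cases hi : (i:ℕ) ≤ (L:ℕ)
            · simp only [hi, if_true]
              rw [Set.indicator]
              split
              · exact le_rfl
              · exact zero_le
            · have hnot : v ∉ C i := by
                intro hvC
                obtain ⟨l, hil, hvl⟩ := mem_iUnion.mp hvC
                exact hi (le_trans hil (hLmax l hvl))
              rw [Set.indicator_of_notMem hnot]
              simp [hi]
        _ = ∑ m ∈ Finset.range n, (if m ≤ (L:ℕ) then ENNReal.ofReal ((2:ℝ) ^ (m + 2) / 3) else 0) :=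
            Fin.sum_univ_eq_sum_range
              (fun m => (if m ≤ (L:ℕ) then ENNReal.ofReal ((2:ℝ) ^ (m + 2) / 3) else 0)) n
        _ = ∑ m ∈ Finset.range ((L:ℕ) + 1), ENNReal.ofReal ((2:ℝ) ^ (m + 2) / 3) := by
            rw [← Finset.sum_filter]
            congr 1
            ext m
            simp only [Finset.mem_filter, Finset.mem_range, Nat.lt_succ_iff]
            constructor
            · rintro ⟨_, h⟩; exact h
            · intro h; exact ⟨lt_of_le_of_lt h L.isLt, h⟩
        _ = ENNReal.ofReal (∑ m ∈ Finset.range ((L:ℕ) + 1), (2:ℝ) ^ (m + 2) / 3) :=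
            (ENNReal.ofReal_sum_of_nonneg (fun m _ => by positivity)).symm
        _ ≤ ENNReal.ofReal (2/3 * 2 ^ ((L:ℕ) + 2)) := by
            apply ENNReal.ofReal_le_ofReal
            have hgeom : ∑ m ∈ Finset.range ((L:ℕ) + 1), (2:ℝ) ^ m
                = (2 ^ ((L:ℕ) + 1) - 1) / (2 - 1) := geom_sum_eq (by norm_num) _
            have hsum2 : ∑ m ∈ Finset.range ((L:ℕ) + 1), (2:ℝ) ^ (m + 2) / 3
                = (∑ m ∈ Finset.range ((L:ℕ) + 1), (2:ℝ) ^ m) * (4/3) := by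
              rw [Finset.sum_mul]
              apply Finset.sum_congr rfl
              intro m _
              rw [pow_add]
              ring
            rw [hsum2, hgeom]
            have h2L : (0:ℝ) < 2 ^ ((L:ℕ) + 1) := by positivity
            have h2L2 : (2:ℝ) ^ ((L:ℕ) + 2) = 2 * 2 ^ ((L:ℕ) + 1) := by ring
            rw [h2L2]
            linarith
        _ ≤ B.revenue P v := by
            rw [hrev]
            simp only [hP]
            exact ENNReal.ofReal_le_ofReal (by linarith)
    · push_neg at hex
      have hnone : ∀ i : Fin n, v ∉ C i := by
        intro i hvC
        obtain ⟨l, _, hvl⟩ := mem_iUnion.mp hvC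
        exact hex l hvl
      rw [Finset.sum_eq_zero (fun i _ => by rw [Set.indicator_of_notMem (hnone i)])]
      exact zero_le
  have hsum : ∫⁻ v, ∑ i : Fin n,
        (C i).indicator (fun _ => ENNReal.ofReal ((2:ℝ) ^ ((i:ℕ) + 2) / 3)) v ∂F
      = ∑ i : Fin n, ENNReal.ofReal ((2:ℝ) ^ ((i:ℕ) + 2) / 3) * F (C i) := by
    rw [lintegral_finset_sum _ (fun i _ => measurable_const.indicator (hCmeas i))]
    apply Finset.sum_congr rfl
    intro i _
    rw [lintegral_indicator (hCmeas i), setLIntegral_const]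
  have hFC : ∀ i : Fin n, ENNReal.ofReal ((2:ℝ) ^ ((i:ℕ) + 2))⁻¹ ≤ F (C i) := by
    intro i
    have hsub : (fun v : Fin n → ℝ => v i) ⁻¹' {(2:ℝ) ^ ((i:ℕ) + 2)} ⊆ C i := by
      intro v hv
      exact mem_iUnion.mpr ⟨i, le_refl i, hv⟩
    calc ENNReal.ofReal ((2:ℝ) ^ ((i:ℕ) + 2))⁻¹
        = F ((fun v : Fin n → ℝ => v i) ⁻¹' {(2:ℝ) ^ ((i:ℕ) + 2)}) := by
          rw [← Measure.map_apply (measurable_pi_apply i) (measurableSet_singleton _),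
            hFmarg i, hmarg i, erTrunc_singleton (one_lt_two_pow_real _)]
      _ ≤ F (C i) := measure_mono hsub
  calc (n : ℝ≥0∞) / 3
      = ∑ _i : Fin n, (3 : ℝ≥0∞)⁻¹ := by
        rw [Finset.sum_const, Finset.card_univ, Fintype.card_fin, nsmul_eq_mul, div_eq_mul_inv]
    _ ≤ ∑ i : Fin n, ENNReal.ofReal ((2:ℝ) ^ ((i:ℕ) + 2) / 3) * F (C i) := by
        apply Finset.sum_le_sum
        intro i _
        calc (3:ℝ≥0∞)⁻¹
            = ENNReal.ofReal ((2:ℝ) ^ ((i:ℕ) + 2) / 3 * ((2:ℝ) ^ ((i:ℕ) + 2))⁻¹) := by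
              have hp : (0:ℝ) < 2 ^ ((i:ℕ) + 2) := by positivity
              rw [show (2:ℝ) ^ ((i:ℕ) + 2) / 3 * ((2:ℝ) ^ ((i:ℕ) + 2))⁻¹ = 3⁻¹ by field_simp,
                ENNReal.ofReal_inv_of_pos (by norm_num : (0:ℝ) < 3)]
              norm_num
          _ = ENNReal.ofReal ((2:ℝ) ^ ((i:ℕ) + 2) / 3) * ENNReal.ofReal ((2:ℝ) ^ ((i:ℕ) + 2))⁻¹ :=
              ENNReal.ofReal_mul (by positivity)
          _ ≤ ENNReal.ofReal ((2:ℝ) ^ ((i:ℕ) + 2) / 3) * F (C i) :=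
              mul_le_mul_right (hFC i) _
    _ = ∫⁻ v, ∑ i : Fin n,
          (C i).indicator (fun _ => ENNReal.ofReal ((2:ℝ) ^ ((i:ℕ) + 2) / 3)) v ∂F := hsum.symm
    _ ≤ expRev B P F := lintegral_mono_ae hpt


end AuxLemmas

/-- (Items are indexed by `i : Fin n`, representing the item `j = i+1` of the
paper.) Let the marginal of item `i` be the equal-revenue distribution truncated at `2^(i+2)`,
and assume the buyer breaks ties among items with equal utility in favor of the higher-priced
item. Then for every `k ≥ 1` and every pricing `p` using at most `k` distinct finite prices,
`R(p) ≤ R(p, F^com) ≤ k`, where `F^com` is the comonotonic distribution; moreover (as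
`R* ≥ n/3` for this instance) no pricing with at most `k` distinct finite prices is better than
`Θ(n/k)`-max-min optimal. -/
theorem few_distinct_prices_bound_for_truncated_equal_revenue
    (n : ℕ) (B : BuyerRule n)
    (htie : ∀ (v : Fin n → ℝ) (p : Fin n → ℝ≥0∞) (j l : Fin n), B.choose v p = some j →
      p l ≠ ⊤ → v l - (p l).toReal = v j - (p j).toReal → p l ≤ p j)
    (marg : Fin n → Measure ℝ) (hmarg : ∀ i : Fin n, marg i = erTrunc ((2 : ℝ) ^ ((i : ℕ) + 2)))
    (k : ℕ) (hk : 1 ≤ k) (p : Fin n → ℝ≥0∞)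
    (hdistinct : ({c : ℝ≥0∞ | c ≠ ⊤ ∧ ∃ i : Fin n, p i = c}).ncard ≤ k) :
    robustRev B marg p ≤ expRev B p (comon marg) ∧
    expRev B p (comon marg) ≤ (k : ℝ≥0∞) ∧
    (n : ℝ≥0∞) / 3 ≤ optRobust B marg := by
  refine ⟨?_, ?_, ?_⟩
  · unfold robustRev
    exact iInf_le_of_le (comon marg) (iInf_le_of_le (comon_compatible marg hmarg) le_rfl)
  · exact expRev_comon_le B marg hmarg k p hdistinct
  · exact optRobust_ge B marg hmarg
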